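/- Let A and B be finite nonempty sets of points in ℝ² whose convex hulls intersect, i.e. convexHull(A) ∩ convexHull(B) ≠ ∅. Then h(A ∪ B) ≤ h(A) + h(B). -/

import Mathlib

noncomputable section

abbrev Plane := EuclideanSpace ℝ (Fin 2)

noncomputable def perim (C : Set Plane) : ℝ :=
  ∫ θ in (0:ℝ)..(2 * Real.pi),
    sSup ((fun p : Plane => p 0 * Real.cos θ + p 1 * Real.sin θ) '' C)

def fθ (θ : ℝ) (p : Plane) : ℝ := p 0 * Real.cos θ + p 1 * Real.sin θ

lemma sup_eq_finset (S : Set Plane) (hS : S.Finite) (hne : S.Nonempty) (θ : ℝ) :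
    sSup ((fun p : Plane => p 0 * Real.cos θ + p 1 * Real.sin θ) '' S)
      = hS.toFinset.sup' (by simpa using hne) (fθ θ) := by
  rw [Finset.sup'_eq_csSup_image]
  congr 1
  rw [Set.Finite.coe_toFinset]
  rfl

lemma cont_sup (S : Set Plane) (hS : S.Finite) (hne : S.Nonempty) :
    Continuous (fun θ : ℝ =>
      sSup ((fun p : Plane => p 0 * Real.cos θ + p 1 * Real.sin θ) '' S)) := by
  have : Continuous (fun θ : ℝ => hS.toFinset.sup' (by simpa using hne) (fun p => fθ θ p)) := by
    apply Continuous.finset_sup'_apply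
    intro p _
    exact (continuous_const.mul Real.continuous_cos).add
      (continuous_const.mul Real.continuous_sin)
  convert this using 2 with θ
  exact sup_eq_finset S hS hne θ

lemma bdd (S : Set Plane) (hS : S.Finite) (θ : ℝ) :
    BddAbove ((fun p : Plane => p 0 * Real.cos θ + p 1 * Real.sin θ) '' S) :=
  (hS.image _).bddAbove

lemma mem_hull_le (S : Set Plane) (hS : S.Finite) (hne : S.Nonempty) (θ : ℝ)
    (x : Plane) (hx : x ∈ convexHull ℝ S) :
    x 0 * Real.cos θ + x 1 * Real.sin θ
      ≤ sSup ((fun p : Plane => p 0 * Real.cos θ + p 1 * Real.sin θ) '' S) := by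
  have hlin : IsLinearMap ℝ (fun p : Plane => p 0 * Real.cos θ + p 1 * Real.sin θ) := by
    constructor <;> intro a b <;> simp [EuclideanSpace] <;> ring
  set c := sSup ((fun p : Plane => p 0 * Real.cos θ + p 1 * Real.sin θ) '' S)
  have hconv : Convex ℝ {p : Plane | p 0 * Real.cos θ + p 1 * Real.sin θ ≤ c} :=
    convex_halfSpace_le hlin c
  have hsub : S ⊆ {p : Plane | p 0 * Real.cos θ + p 1 * Real.sin θ ≤ c} := by
    intro p hp
    exact le_csSup (bdd S hS θ) ⟨p, hp, rfl⟩
  exact convexHull_min hsub hconv hx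

theorem perim_union_le_of_hulls_intersect
    (A B : Set Plane) (hA : A.Finite) (hAne : A.Nonempty)
    (hB : B.Finite) (hBne : B.Nonempty)
    (hint : (convexHull ℝ A ∩ convexHull ℝ B).Nonempty) :
    perim (A ∪ B) ≤ perim A + perim B := by
  obtain ⟨x, hxA, hxB⟩ := hint
  set g : Set Plane → ℝ → ℝ := fun S θ =>
    sSup ((fun p : Plane => p 0 * Real.cos θ + p 1 * Real.sin θ) '' S) with hg
  have key : ∀ θ : ℝ, g (A ∪ B) θ ≤ g A θ + g B θ - (x 0 * Real.cos θ + x 1 * Real.sin θ) := by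
    intro θ
    have himg : (fun p : Plane => p 0 * Real.cos θ + p 1 * Real.sin θ) '' (A ∪ B)
        = _ '' A ∪ _ '' B := Set.image_union _ _ _
    have hU : g (A ∪ B) θ = g A θ ⊔ g B θ := by
      rw [hg]; simp only; rw [himg]
      exact csSup_union (bdd A hA θ) (hAne.image _) (bdd B hB θ) (hBne.image _)
    rw [hU]
    have h1 := mem_hull_le A hA hAne θ x hxA
    have h2 := mem_hull_le B hB hBne θ x hxB
    rcases le_total (g A θ) (g B θ) with h | h
    · rw [sup_eq_right.2 h]; linarith
    · rw [sup_eq_left.2 h]; linarith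
  have cA := cont_sup A hA hAne
  have cB := cont_sup B hB hBne
  have cU := cont_sup (A ∪ B) (hA.union hB) (hAne.inl)
  have cx : Continuous (fun θ : ℝ => x 0 * Real.cos θ + x 1 * Real.sin θ) :=
    (continuous_const.mul Real.continuous_cos).add (continuous_const.mul Real.continuous_sin)
  have hle : ∫ θ in (0:ℝ)..(2 * Real.pi), g (A ∪ B) θ
      ≤ ∫ θ in (0:ℝ)..(2 * Real.pi),
        (g A θ + g B θ - (x 0 * Real.cos θ + x 1 * Real.sin θ)) := by
    apply intervalIntegral.integral_mono_on (by positivity)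
    · exact cU.intervalIntegrable _ _
    · exact ((cA.add cB).sub cx).intervalIntegrable _ _
    · intro θ _; exact key θ
  have hx0 : ∫ θ in (0:ℝ)..(2 * Real.pi), (x 0 * Real.cos θ + x 1 * Real.sin θ) = 0 := by
    rw [intervalIntegral.integral_add
        ((show Continuous fun θ : ℝ => x 0 * Real.cos θ from continuous_const.mul Real.continuous_cos).intervalIntegrable _ _)
        ((show Continuous fun θ : ℝ => x 1 * Real.sin θ from continuous_const.mul Real.continuous_sin).intervalIntegrable _ _),
      intervalIntegral.integral_const_mul, intervalIntegral.integral_const_mul,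
      integral_cos, integral_sin]
    simp
  have hsplit : ∫ θ in (0:ℝ)..(2 * Real.pi),
      (g A θ + g B θ - (x 0 * Real.cos θ + x 1 * Real.sin θ))
      = (∫ θ in (0:ℝ)..(2 * Real.pi), g A θ) + (∫ θ in (0:ℝ)..(2 * Real.pi), g B θ)
        - ∫ θ in (0:ℝ)..(2 * Real.pi), (x 0 * Real.cos θ + x 1 * Real.sin θ) := by
    rw [intervalIntegral.integral_sub ((show Continuous fun θ => g A θ + g B θ from cA.add cB).intervalIntegrable _ _)
        (cx.intervalIntegrable _ _),
      intervalIntegral.integral_add ((show Continuous fun θ => g A θ from cA).intervalIntegrable _ _)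
        ((show Continuous fun θ => g B θ from cB).intervalIntegrable _ _)]
  calc perim (A ∪ B) = ∫ θ in (0:ℝ)..(2 * Real.pi), g (A ∪ B) θ := rfl
    _ ≤ _ := hle
    _ = _ := hsplit
    _ ≤ perim A + perim B := by rw [hx0]; simp [perim, hg]

end
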